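/- Let C be a nonnegative matrix indexed by finite set I with C_{ij} = 0 whenever the graph distance d(i,j) ≠ 1, and c = max_i Σ_j C_{ij} with 0 < c < 1. Let D = (I−C)^{-1}, fix a node i and a subset J ⊆ I, and fix t > 1. Then Σ_{j∈J} D_{ij} ≤ (t/((t−1)(1−c))) · ((tc)/(1+(t−1)c))^{d(i,J)}, where d(i,J) = min_{j∈J} d(i,j). In particular, if d(i,J) ≥ ln(t/(2ε(t−1)(1−c))) / ln((1+(t−1)c)/(tc)), then Σ_{j∈J} D_{ij} · (1/2) ≤ ε. -/

import Mathlib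

open Finset

section aux

attribute [local instance] Matrix.linftyOpNormedRing Matrix.linftyOpNormedAlgebra

theorem aux_neumann {I : Type*} [Fintype I] [DecidableEq I]
    (dist : I → I → ℕ) (hd0 : ∀ i j, dist i j = 0 ↔ i = j)
    (hdtri : ∀ i j k, dist i k ≤ dist i j + dist j k)
    (C : Matrix I I ℝ) (hCnn : ∀ i j, 0 ≤ C i j)
    (hsupp : ∀ i j, dist i j ≠ 1 → C i j = 0)
    (c : ℝ) (hrow : ∀ i, ∑ j, C i j ≤ c)
    (hc0 : 0 ≤ c) (hc1 : c < 1)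
    (i : I) (J : Finset I) (hJ : J.Nonempty) :
    ∑ j ∈ J, ((1 - C)⁻¹) i j ≤ c ^ (J.inf' hJ fun j => dist i j) * (1 - c)⁻¹ := by
  -- norm bound
  have hnorm : ‖C‖ ≤ c := by
    rw [Matrix.linfty_opNorm_def]
    have : (Finset.univ.sup fun i => ∑ j, ‖C i j‖₊) ≤ ⟨c, hc0⟩ :=
      Finset.sup_le fun k _ => by
        refine NNReal.coe_le_coe.mp ?_
        push_cast
        calc ∑ j, ‖C k j‖ = ∑ j, C k j := by
              simp [Real.norm_of_nonneg (hCnn k _)]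
          _ ≤ c := hrow k
    exact_mod_cast this
  have hlt : ‖C‖ < 1 := lt_of_le_of_lt hnorm hc1
  have hsum : Summable (fun n => C ^ n) := summable_geometric_of_norm_lt_one hlt
  have hinv : (1 - C)⁻¹ = ∑' n, C ^ n :=
    Matrix.inv_eq_right_inv (mul_neg_geom_series C hlt)
  -- entrywise facts about powers
  have hpow_nn : ∀ n k j, 0 ≤ (C ^ n) k j := by
    intro n
    induction n with
    | zero => intro k j; by_cases h : k = j <;> simp [Matrix.one_apply, h]
    | succ n ih =>
      intro k j
      rw [pow_succ, Matrix.mul_apply]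
      exact Finset.sum_nonneg fun l _ => mul_nonneg (ih k l) (hCnn l j)
  have hpow_row : ∀ n k, ∑ j, (C ^ n) k j ≤ c ^ n := by
    intro n
    induction n with
    | zero => intro k; simp [Matrix.one_apply]
    | succ n ih =>
      intro k
      have : ∑ j, (C ^ (n+1)) k j = ∑ l, (C ^ n) k l * ∑ j, C l j := by
        simp_rw [pow_succ, Matrix.mul_apply, Finset.mul_sum]
        rw [Finset.sum_comm]
      rw [this, pow_succ]
      calc ∑ l, (C ^ n) k l * ∑ j, C l j ≤ ∑ l, (C ^ n) k l * c :=
            Finset.sum_le_sum fun l _ => mul_le_mul_of_nonneg_left (hrow l) (hpow_nn n k l)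
        _ = (∑ l, (C ^ n) k l) * c := by rw [← Finset.sum_mul]
        _ ≤ c ^ n * c := mul_le_mul_of_nonneg_right (ih k) hc0
  have hpow_supp : ∀ n k j, n < dist k j → (C ^ n) k j = 0 := by
    intro n
    induction n with
    | zero =>
      intro k j h
      have : k ≠ j := fun e => by simp [e, (hd0 j j).mpr rfl] at h
      simp [Matrix.one_apply, this]
    | succ n ih =>
      intro k j h
      rw [pow_succ', Matrix.mul_apply]
      refine Finset.sum_eq_zero fun l _ => ?_
      by_cases hl : dist k l = 1
      · have : n < dist l j := by
          have := hdtri k l j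
          omega
        rw [ih l j this, mul_zero]
      · rw [hsupp k l hl, zero_mul]
  -- the entrywise sum as a continuous linear map
  let φ₀ : Matrix I I ℝ →ₗ[ℝ] ℝ :=
    { toFun := fun M => ∑ j ∈ J, M i j
      map_add' := fun M N => by simp [Finset.sum_add_distrib]
      map_smul' := fun r M => by simp [Finset.mul_sum] }
  let φ : Matrix I I ℝ →L[ℝ] ℝ := LinearMap.toContinuousLinearMap φ₀
  have hφ : ∀ M, φ M = ∑ j ∈ J, M i j := fun M => rfl
  set f : ℕ → ℝ := fun n => ∑ j ∈ J, (C ^ n) i j with hf_def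
  have hf : Summable f := by
    have := hsum.map φ.toLinearMap.toAddMonoidHom φ.continuous
    exact this
  have h1 : ∑ j ∈ J, ((1 - C)⁻¹) i j = ∑' n, f n := by
    rw [hinv, ← hφ, φ.map_tsum hsum]
    simp [hφ, hf_def]
  set d : ℕ := J.inf' hJ fun j => dist i j with hd_def
  have hfd : ∀ n, n < d → f n = 0 := by
    intro n hn
    refine Finset.sum_eq_zero fun j hj => ?_
    exact hpow_supp n i j (lt_of_lt_of_le hn (Finset.inf'_le _ hj))
  have hfle : ∀ n, f n ≤ c ^ n := fun n =>
    le_trans (Finset.sum_le_sum_of_subset_of_nonneg (Finset.subset_univ J)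
      (fun j _ _ => hpow_nn n i j)) (hpow_row n i)
  have hg : Summable (fun n : ℕ => c ^ (n + d)) := by
    simp_rw [pow_add]
    exact (summable_geometric_of_lt_one hc0 hc1).mul_right _
  have h2 : ∑' n, f n = ∑' n, f (n + d) := by
    rw [← Summable.sum_add_tsum_nat_add d hf, Finset.sum_eq_zero fun n hn => hfd n (Finset.mem_range.mp hn),
      zero_add]
  have h3 : ∑' n, f (n + d) ≤ ∑' n, c ^ (n + d) :=
    Summable.tsum_le_tsum (fun n => hfle (n + d)) ((summable_nat_add_iff d).mpr hf) hg
  have h4 : ∑' n : ℕ, c ^ (n + d) = c ^ d * (1 - c)⁻¹ := by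
    simp_rw [pow_add]
    rw [tsum_mul_right, tsum_geometric_of_lt_one hc0 hc1, mul_comm]
  rw [h1, h2]
  rw [h4] at h3
  exact h3

end aux

theorem distance_based_neumann_bound {I : Type*} [Fintype I] [DecidableEq I] [Nonempty I]
    (dist : I → I → ℕ)
    (hd0 : ∀ i j, dist i j = 0 ↔ i = j)
    (hdsymm : ∀ i j, dist i j = dist j i)
    (hdtri : ∀ i j k, dist i k ≤ dist i j + dist j k)
    (C : Matrix I I ℝ) (hCnn : ∀ i j, 0 ≤ C i j)
    (hsupp : ∀ i j, dist i j ≠ 1 → C i j = 0)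
    (c : ℝ) (hc : c = Finset.univ.sup' Finset.univ_nonempty fun i => ∑ j, C i j)
    (hc0 : 0 < c) (hc1 : c < 1)
    (t : ℝ) (ht : 1 < t)
    (i : I) (J : Finset I) (hJ : J.Nonempty) :
    ∑ j ∈ J, ((1 - C)⁻¹) i j
      ≤ t / ((t - 1) * (1 - c)) * ((t * c) / (1 + (t - 1) * c)) ^ (J.inf' hJ fun j => dist i j) ∧
    (∀ ε : ℝ, 0 < ε →
      (((J.inf' hJ fun j => dist i j : ℕ) : ℝ)
          ≥ Real.log (t / (2 * ε * (t - 1) * (1 - c))) / Real.log ((1 + (t - 1) * c) / (t * c)))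
        → (∑ j ∈ J, ((1 - C)⁻¹) i j) * (1 / 2) ≤ ε) := by
  have hrow : ∀ k, ∑ j, C k j ≤ c := fun k => by rw [hc]; exact Finset.le_sup' (fun i => ∑ j, C i j) (Finset.mem_univ k)
  set d : ℕ := J.inf' hJ fun j => dist i j with hd_def
  have key : ∑ j ∈ J, ((1 - C)⁻¹) i j ≤ c ^ d * (1 - c)⁻¹ :=
    aux_neumann dist hd0 hdtri C hCnn hsupp c hrow hc0.le hc1 i J hJ
  have ht0 : (0:ℝ) < t := lt_trans one_pos ht
  have ht1 : (0:ℝ) < t - 1 := by linarith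
  have h1c : (0:ℝ) < 1 - c := by linarith
  have hden : (0:ℝ) < 1 + (t - 1) * c := by nlinarith
  set r : ℝ := t * c / (1 + (t - 1) * c) with hr_def
  have hr0 : 0 < r := div_pos (by nlinarith) hden
  have hcr : c ≤ r := by
    rw [hr_def, le_div_iff₀ hden]
    nlinarith [mul_pos (mul_pos ht1 hc0) h1c]
  have hr1 : r < 1 := by
    rw [hr_def, div_lt_one hden]
    nlinarith
  have part1 : ∑ j ∈ J, ((1 - C)⁻¹) i j ≤ t / ((t - 1) * (1 - c)) * r ^ d := by
    refine le_trans key ?_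
    have h1 : c ^ d ≤ r ^ d := pow_le_pow_left₀ hc0.le hcr d
    have h2 : (1 - c)⁻¹ ≤ t / ((t - 1) * (1 - c)) := by
      rw [le_div_iff₀ (by positivity : (0:ℝ) < (t - 1) * (1 - c))]
      calc (1 - c)⁻¹ * ((t - 1) * (1 - c)) = t - 1 := by field_simp
        _ ≤ t := by linarith
    calc c ^ d * (1 - c)⁻¹ ≤ r ^ d * (t / ((t - 1) * (1 - c))) :=
          mul_le_mul h1 h2 (by positivity) (by positivity)
      _ = t / ((t - 1) * (1 - c)) * r ^ d := mul_comm _ _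
  refine ⟨part1, fun ε hε hge => ?_⟩
  set A : ℝ := t / (2 * ε * (t - 1) * (1 - c)) with hA_def
  have hA0 : 0 < A := by positivity
  have hL : Real.log ((1 + (t - 1) * c) / (t * c)) = -Real.log r := by
    rw [hr_def, ← Real.log_inv, inv_div]
  have hlogr : Real.log r < 0 := Real.log_neg hr0 hr1
  have hdL : (d : ℝ) * (-Real.log r) ≥ Real.log A := by
    rw [hL] at hge
    rw [ge_iff_le, div_le_iff₀ (by linarith)] at hge
    linarith [hge]
  have hrd : r ^ d ≤ A⁻¹ := by
    have h1 : r ^ d = Real.exp ((d : ℝ) * Real.log r) := by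
      rw [← Real.log_pow, Real.exp_log (by positivity)]
    rw [h1, ← Real.exp_log (inv_pos.mpr hA0), Real.log_inv]
    exact Real.exp_le_exp.mpr (by linarith)
  have hfinal : t / ((t - 1) * (1 - c)) * r ^ d ≤ 2 * ε := by
    have : t / ((t - 1) * (1 - c)) * A⁻¹ = 2 * ε := by
      rw [hA_def]
      field_simp
    calc t / ((t - 1) * (1 - c)) * r ^ d ≤ t / ((t - 1) * (1 - c)) * A⁻¹ :=
          mul_le_mul_of_nonneg_left hrd (by positivity)
      _ = 2 * ε := this
  nlinarith [le_trans part1 hfinal]
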